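/- Let n ≥ 1, let A be an IFM of order n and let λ ∈ [0,1). If r, s, j are indices and Lr, Ls, Mr, Ms are reals with (A^m)μ r j → Lr, (A^m)μ s j → Ls, (A^m)ν r j → Mr, (A^m)ν s j → Ms as m → ∞ (powers taken with the ∗ operation), then Lr = Ls and Mr = Ms; that is, in the limit matrix all entries of each column are identical. -/

import Mathlib

open Filter Topology

/-- Membership scalar operation of the convex combination of max-min and
maxarithmetic mean–minarithmetic mean: `x ⊛ y = λ·min(x,y) + (1-λ)·(x+y)/2`. -/
noncomputable def starMu (lam x y : ℝ) : ℝ :=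
  lam * min x y + (1 - lam) * ((x + y) / 2)

/-- Non-membership scalar operation:
`x ⊛' y = λ·max(x,y) + (1-λ)·(x+y)/2`. -/
noncomputable def starNu (lam x y : ℝ) : ℝ :=
  lam * max x y + (1 - lam) * ((x + y) / 2)

/-- `A` (given by membership part `Amu` and non-membership part `Anu`) is an
intuitionistic fuzzy matrix. -/
def IsIFM (n : ℕ) (Amu Anu : Fin n → Fin n → ℝ) : Prop :=
  ∀ i j, 0 ≤ Amu i j ∧ 0 ≤ Anu i j ∧ Amu i j + Anu i j ≤ 1

/-- Powers of an IFM under the convex combination `∗` of the max-min and the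
maxarithmetic mean–minarithmetic mean operations: `A^1 = A`,
`A^(k+1) = A^k ∗ A` with
`(X ∗ A)μ i j = max_t (Xμ i t ⊛ Aμ t j)` and
`(X ∗ A)ν i j = min_t (Xν i t ⊛' Aν t j)`.
(The value at `0` is irrelevant; it is set to `A`.) -/
noncomputable def sPow (n : ℕ) (lam : ℝ) (Amu Anu : Fin n → Fin n → ℝ) :
    ℕ → (Fin n → Fin n → ℝ) × (Fin n → Fin n → ℝ)
  | 0 => (Amu, Anu)
  | 1 => (Amu, Anu)
  | m + 2 =>
    let X := sPow n lam Amu Anu (m + 1)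
    (fun i j => ⨆ t : Fin n, starMu lam (X.1 i t) (Amu t j),
     fun i j => ⨅ t : Fin n, starNu lam (X.2 i t) (Anu t j))

lemma starMu_lip (lam x x' y : ℝ) (h0 : 0 ≤ lam) (_h1 : lam ≤ 1) :
    |starMu lam x y - starMu lam x' y| ≤ (1 + lam) / 2 * |x - x'| := by
  have hm : |min x y - min x' y| ≤ |x - x'| := by
    calc |min x y - min x' y| ≤ max |x - x'| |y - y| := abs_min_sub_min_le_max x y x' y
      _ = |x - x'| := by rw [sub_self, abs_zero, max_eq_left (abs_nonneg _)]
  have expand : starMu lam x y - starMu lam x' y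
      = lam * (min x y - min x' y) + (1 - lam) / 2 * (x - x') := by
    unfold starMu; ring
  rw [expand]
  calc |lam * (min x y - min x' y) + (1 - lam) / 2 * (x - x')|
      ≤ lam * |min x y - min x' y| + (1 - lam) / 2 * |x - x'| := by
        refine (abs_add_le _ _).trans ?_
        rw [abs_mul, abs_mul, abs_of_nonneg h0,
          abs_of_nonneg (by linarith : (0:ℝ) ≤ (1 - lam) / 2)]
    _ ≤ lam * |x - x'| + (1 - lam) / 2 * |x - x'| :=
        add_le_add_left (mul_le_mul_of_nonneg_left hm h0) _
    _ = (1 + lam) / 2 * |x - x'| := by ring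

lemma starNu_lip (lam x x' y : ℝ) (h0 : 0 ≤ lam) (_h1 : lam ≤ 1) :
    |starNu lam x y - starNu lam x' y| ≤ (1 + lam) / 2 * |x - x'| := by
  have hm : |max x y - max x' y| ≤ |x - x'| := by
    calc |max x y - max x' y| ≤ max |x - x'| |y - y| := abs_max_sub_max_le_max x y x' y
      _ = |x - x'| := by rw [sub_self, abs_zero, max_eq_left (abs_nonneg _)]
  have expand : starNu lam x y - starNu lam x' y
      = lam * (max x y - max x' y) + (1 - lam) / 2 * (x - x') := by
    unfold starNu; ring
  rw [expand]
  calc |lam * (max x y - max x' y) + (1 - lam) / 2 * (x - x')|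
      ≤ lam * |max x y - max x' y| + (1 - lam) / 2 * |x - x'| := by
        refine (abs_add_le _ _).trans ?_
        rw [abs_mul, abs_mul, abs_of_nonneg h0,
          abs_of_nonneg (by linarith : (0:ℝ) ≤ (1 - lam) / 2)]
    _ ≤ lam * |x - x'| + (1 - lam) / 2 * |x - x'| :=
        add_le_add_left (mul_le_mul_of_nonneg_left hm h0) _
    _ = (1 + lam) / 2 * |x - x'| := by ring

lemma ciSup_abs_sub_le {n : ℕ} [Nonempty (Fin n)] (f g : Fin n → ℝ) (c : ℝ)
    (h : ∀ t, |f t - g t| ≤ c) : |(⨆ t, f t) - (⨆ t, g t)| ≤ c := by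
  have key : ∀ f g : Fin n → ℝ, (∀ t, |f t - g t| ≤ c) →
      (⨆ t, f t) - (⨆ t, g t) ≤ c := by
    intro f g h
    rw [sub_le_iff_le_add']
    refine ciSup_le fun t => ?_
    have h1 : f t ≤ g t + c := by have := (abs_le.mp (h t)).2; linarith
    exact h1.trans (add_le_add_left
      (le_ciSup (Set.Finite.bddAbove (Set.finite_range g)) t) c)
  rw [abs_sub_le_iff]
  exact ⟨key f g h, key g f fun t => by rw [abs_sub_comm]; exact h t⟩

lemma ciInf_abs_sub_le {n : ℕ} [Nonempty (Fin n)] (f g : Fin n → ℝ) (c : ℝ)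
    (h : ∀ t, |f t - g t| ≤ c) : |(⨅ t, f t) - (⨅ t, g t)| ≤ c := by
  have key : ∀ f g : Fin n → ℝ, (∀ t, |f t - g t| ≤ c) →
      (⨅ t, f t) - (⨅ t, g t) ≤ c := by
    intro f g h
    have hmain : (⨅ t, f t) - c ≤ ⨅ t, g t := by
      refine le_ciInf fun t => ?_
      have h1 := (abs_le.mp (h t)).2
      have h2 : (⨅ u, f u) ≤ f t := ciInf_le (Set.Finite.bddBelow (Set.finite_range f)) t
      linarith
    linarith
  rw [abs_sub_le_iff]
  exact ⟨key f g h, key g f fun t => by rw [abs_sub_comm]; exact h t⟩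

/-- Theorem 4.5 (second part): in the limit of the powers of an IFM under the
`∗` operation, all entries of each column coincide. -/
theorem sPow_limit_columns_identical (n : ℕ) (hn : 1 ≤ n)
    (Amu Anu : Fin n → Fin n → ℝ) (hA : IsIFM n Amu Anu)
    (lam : ℝ) (hlam : lam ∈ Set.Ico (0 : ℝ) 1)
    (r s j : Fin n) (Lr Ls Mr Ms : ℝ)
    (hLr : Tendsto (fun m => (sPow n lam Amu Anu m).1 r j) atTop (𝓝 Lr))
    (hLs : Tendsto (fun m => (sPow n lam Amu Anu m).1 s j) atTop (𝓝 Ls))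
    (hMr : Tendsto (fun m => (sPow n lam Amu Anu m).2 r j) atTop (𝓝 Mr))
    (hMs : Tendsto (fun m => (sPow n lam Amu Anu m).2 s j) atTop (𝓝 Ms)) :
    Lr = Ls ∧ Mr = Ms := by
  obtain ⟨hl0, hl1⟩ := hlam
  haveI : Nonempty (Fin n) := Fin.pos_iff_nonempty.mp hn
  set c : ℝ := (1 + lam) / 2 with hc
  have hc0 : 0 ≤ c := by rw [hc]; linarith
  have hc1 : c < 1 := by rw [hc]; linarith
  -- key bound by induction
  have hb : ∀ m : ℕ, ∀ t : Fin n,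
      |(sPow n lam Amu Anu m).1 r t - (sPow n lam Amu Anu m).1 s t| ≤ c ^ (m - 1) ∧
      |(sPow n lam Amu Anu m).2 r t - (sPow n lam Amu Anu m).2 s t| ≤ c ^ (m - 1) := by
    have base : ∀ t : Fin n,
        |Amu r t - Amu s t| ≤ 1 ∧ |Anu r t - Anu s t| ≤ 1 := by
      intro t
      obtain ⟨h1, h2, h3⟩ := hA r t
      obtain ⟨h4, h5, h6⟩ := hA s t
      constructor <;> rw [abs_le] <;> constructor <;> linarith
    intro m
    induction m with
    | zero => simpa [sPow] using base
    | succ k ih =>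
      cases k with
      | zero => simpa [sPow] using base
      | succ l =>
        intro t
        have hpow : c ^ (l + 1 + 1 - 1) = c * c ^ (l + 1 - 1) := by
          simp [pow_succ, mul_comm]
        rw [hpow]
        constructor
        · show |(⨆ u : Fin n, starMu lam ((sPow n lam Amu Anu (l+1)).1 r u) (Amu u t)) -
              (⨆ u : Fin n, starMu lam ((sPow n lam Amu Anu (l+1)).1 s u) (Amu u t))| ≤ _
          refine ciSup_abs_sub_le _ _ _ fun u => ?_
          refine (starMu_lip lam _ _ _ hl0 hl1.le).trans ?_
          exact mul_le_mul_of_nonneg_left ((ih u).1) hc0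
        · show |(⨅ u : Fin n, starNu lam ((sPow n lam Amu Anu (l+1)).2 r u) (Anu u t)) -
              (⨅ u : Fin n, starNu lam ((sPow n lam Amu Anu (l+1)).2 s u) (Anu u t))| ≤ _
          refine ciInf_abs_sub_le _ _ _ fun u => ?_
          refine (starNu_lip lam _ _ _ hl0 hl1.le).trans ?_
          exact mul_le_mul_of_nonneg_left ((ih u).2) hc0
  have hgeo : Tendsto (fun m : ℕ => c ^ (m - 1)) atTop (𝓝 0) :=
    (tendsto_pow_atTop_nhds_zero_of_lt_one hc0 hc1).comp (tendsto_sub_atTop_nat 1)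
  constructor
  · have h1 : Tendsto (fun m => (sPow n lam Amu Anu m).1 r j -
        (sPow n lam Amu Anu m).1 s j) atTop (𝓝 (Lr - Ls)) := hLr.sub hLs
    have h2 : Tendsto (fun m => (sPow n lam Amu Anu m).1 r j -
        (sPow n lam Amu Anu m).1 s j) atTop (𝓝 0) := by
      refine squeeze_zero_norm (fun m => ?_) hgeo
      rw [Real.norm_eq_abs]; exact (hb m j).1
    have := tendsto_nhds_unique h1 h2
    linarith
  · have h1 : Tendsto (fun m => (sPow n lam Amu Anu m).2 r j -
        (sPow n lam Amu Anu m).2 s j) atTop (𝓝 (Mr - Ms)) := hMr.sub hMs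
    have h2 : Tendsto (fun m => (sPow n lam Amu Anu m).2 r j -
        (sPow n lam Amu Anu m).2 s j) atTop (𝓝 0) := by
      refine squeeze_zero_norm (fun m => ?_) hgeo
      rw [Real.norm_eq_abs]; exact (hb m j).2
    have := tendsto_nhds_unique h1 h2
    linarith
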